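/- The number Γ of r-tuples (T_1,...,T_r) of meta-queries (each a set of k node-disjoint paths of length d in a graph with at most d·B^{d+1} edges, with each T_i determined by its edge set) in which every edge occurs zero or at least two times in total satisfies Γ ≤ C(dB^{d+1}, rkd/2) · C(rkd/2, kd)^r ≤ ((e^3 r B^{d+1})/(2k))^{rkd/2}. -/

import Mathlib

open Finset

lemma choose_le_exp_pow_aux (a b : ℕ) (hb : 0 < b) :
    (a.choose b : ℝ) ≤ (Real.exp 1 * a / b) ^ b := by
  have hb' : (0:ℝ) < b := Nat.cast_pos.mpr hb
  have h1 : (a.choose b : ℝ) ≤ (a:ℝ) ^ b / b.factorial := Nat.choose_le_pow_div b a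
  have h2 : ((b:ℝ)) ^ b / b.factorial ≤ Real.exp b := by
    refine le_trans ?_ (Real.sum_le_exp_of_nonneg (x := (b:ℝ)) (by positivity) (b+1))
    exact Finset.single_le_sum (f := fun i => (b:ℝ)^i / i.factorial)
      (fun i _ => by positivity) (Finset.self_mem_range_succ b)
  have hfac : (0:ℝ) < (b.factorial : ℝ) := by exact_mod_cast b.factorial_pos
  have hexp : Real.exp (b:ℝ) = Real.exp 1 ^ b := by
    rw [← Real.exp_nat_mul, mul_one]
  have h3 : ((b:ℝ))^b ≤ Real.exp 1 ^ b * b.factorial := by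
    rw [div_le_iff₀ hfac, hexp] at h2
    linarith
  calc (a.choose b : ℝ) ≤ (a:ℝ)^b / b.factorial := h1
    _ ≤ Real.exp 1 ^ b * (a:ℝ)^b / (b:ℝ)^b := by
        rw [div_le_div_iff₀ hfac (by positivity)]
        calc (a:ℝ)^b * (b:ℝ)^b ≤ (a:ℝ)^b * (Real.exp 1 ^ b * b.factorial) :=
              mul_le_mul_of_nonneg_left h3 (by positivity)
          _ = Real.exp 1 ^ b * (a:ℝ)^b * b.factorial := by ring
    _ = (Real.exp 1 * a / b) ^ b := by rw [div_pow, mul_pow]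

/-- Counting tuples of meta-queries in which every edge occurs zero or at least two
times. Meta-queries are identified with their edge sets (each being the union of `k`
node-disjoint paths of length `d`, hence of cardinality `kd`, and determining the
meta-query), in a graph with at most `d·B^{d+1}` edges. The number `Γ` of `r`-tuples
`(T 1, …, T r)` of meta-queries in which every edge occurs in total zero or at least
two times satisfies
`Γ ≤ C(dB^{d+1}, rkd/2) · C(rkd/2, kd)^r ≤ ((e³ r B^{d+1})/(2k))^{rkd/2}`. -/
theorem gamma_bound
    {E : Type} [Fintype E] [DecidableEq E]
    (B d r k : ℕ) (hB : 1 ≤ B) (hd : 1 ≤ d) (hr : 1 ≤ r) (hk : 1 ≤ k)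
    (hE : Fintype.card E ≤ d * B ^ (d + 1))
    (hdvd : 2 ∣ r * k * d)
    (hle₁ : k * d ≤ r * k * d / 2) (hle₂ : r * k * d / 2 ≤ d * B ^ (d + 1))
    (valid : Finset E → Prop) [DecidablePred valid]
    (hcard : ∀ S, valid S → S.card = k * d) :
    (((univ : Finset (Fin r → Finset E)).filter
        (fun f => (∀ i, valid (f i)) ∧
          ∀ e : E,
            ((univ : Finset (Fin r)).filter (fun i => e ∈ f i)).card = 0 ∨
            2 ≤ ((univ : Finset (Fin r)).filter (fun i => e ∈ f i)).card)).card
      ≤ Nat.choose (d * B ^ (d + 1)) (r * k * d / 2)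
          * Nat.choose (r * k * d / 2) (k * d) ^ r) ∧
    ((Nat.choose (d * B ^ (d + 1)) (r * k * d / 2)
          * Nat.choose (r * k * d / 2) (k * d) ^ r : ℝ)
      ≤ ((Real.exp 1 ^ 3 * r * B ^ (d + 1)) / (2 * k)) ^ (r * k * d / 2)) := by
  classical
  set N := d * B ^ (d + 1) with hNdef
  set n := r * k * d / 2 with hndef
  set m := k * d with hmdef
  have hm0 : 0 < m := Nat.mul_pos hk hd
  have hn0 : 0 < n := lt_of_lt_of_le hm0 hle₁
  have h2n : 2 * n = r * k * d := Nat.mul_div_cancel' hdvd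
  have hrm : r * m = 2 * n := by rw [hmdef, ← mul_assoc, h2n]
  constructor
  · -- combinatorial part
    set E' := E ⊕ Fin (N - Fintype.card E) with hE'def
    have hE' : Fintype.card E' = N := by
      simp only [hE'def, Fintype.card_sum, Fintype.card_fin]
      omega
    set ι : Finset E → Finset E' := fun S => S.map (Function.Embedding.inl) with hιdef
    have hι : ∀ S, (ι S).card = S.card := fun S => Finset.card_map _
    have hιinj : Function.Injective ι := fun S T h => Finset.map_injective _ h
    have hιmono : ∀ {S T : Finset E}, S ⊆ T → ι S ⊆ ι T :=
      fun h => Finset.map_subset_map.mpr h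
    set T : Finset ((_ : Finset E') × (Fin r → Finset E')) :=
      ((univ : Finset E').powersetCard n).sigma
        (fun S => Fintype.piFinset (fun _ : Fin r => S.powersetCard m)) with hTdef
    have hTcard : T.card = N.choose n * n.choose m ^ r := by
      have h1 : ∀ S ∈ (univ : Finset E').powersetCard n,
          (Fintype.piFinset (fun _ : Fin r => S.powersetCard m)).card = n.choose m ^ r := by
        intro S hS
        have hSc : S.card = n := (Finset.mem_powersetCard.mp hS).2
        rw [Fintype.card_piFinset]
        simp [Finset.card_powersetCard, hSc, Finset.prod_const]
      rw [hTdef, Finset.card_sigma, Finset.sum_congr rfl h1, Finset.sum_const,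
        Finset.card_powersetCard, Finset.card_univ, hE', smul_eq_mul]
    have hext : ∀ u : Finset E', u.card ≤ n → ∃ v : Finset E', u ⊆ v ∧ v.card = n := by
      intro u hu
      obtain ⟨v, h1, _, h2⟩ := Finset.exists_subsuperset_card_eq (Finset.subset_univ u) hu
        (by rw [Finset.card_univ, hE']; exact hle₂)
      exact ⟨v, h1, h2⟩
    set ext : Finset E' → Finset E' := fun u =>
      if hu : u.card ≤ n then (hext u hu).choose else u with hextdef
    have hext1 : ∀ u (hu : u.card ≤ n), u ⊆ ext u := by
      intro u hu; simp only [hextdef, dif_pos hu]; exact (hext u hu).choose_spec.1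
    have hext2 : ∀ u (hu : u.card ≤ n), (ext u).card = n := by
      intro u hu; simp only [hextdef, dif_pos hu]; exact (hext u hu).choose_spec.2
    rw [← hTcard]
    apply Finset.card_le_card_of_injOn
      (fun f => (⟨ext (ι ((univ : Finset (Fin r)).biUnion f)), fun i => ι (f i)⟩ :
        (_ : Finset E') × (Fin r → Finset E')))
    · intro f hf
      simp only [Finset.mem_coe, Finset.mem_filter, Finset.mem_univ, true_and] at hf
      obtain ⟨hvalid, hdeg⟩ := hf
      have hfi : ∀ i : Fin r, f i ⊆ (univ : Finset (Fin r)).biUnion f :=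
        fun i => Finset.subset_biUnion_of_mem f (Finset.mem_univ i)
      -- union bound
      have hub : ((univ : Finset (Fin r)).biUnion f).card ≤ n := by
        set U := (univ : Finset (Fin r)).biUnion f with hU
        have hsum : ∑ e ∈ U, ((univ : Finset (Fin r)).filter (fun i => e ∈ f i)).card
            = ∑ i : Fin r, (f i).card := by
          calc ∑ e ∈ U, ((univ : Finset (Fin r)).filter (fun i => e ∈ f i)).card
              = ∑ e ∈ U, ∑ i : Fin r, if e ∈ f i then 1 else 0 :=
                Finset.sum_congr rfl fun e _ => Finset.card_filter _ _
            _ = ∑ i : Fin r, ∑ e ∈ U, if e ∈ f i then 1 else 0 := Finset.sum_comm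
            _ = ∑ i : Fin r, (f i).card := by
                refine Finset.sum_congr rfl fun i _ => ?_
                rw [← Finset.card_filter, Finset.filter_mem_eq_inter,
                  Finset.inter_eq_right.mpr (hfi i)]
        have hsum2 : ∑ i : Fin r, (f i).card = r * m := by
          rw [Finset.sum_congr rfl (fun i _ => hcard (f i) (hvalid i)), Finset.sum_const,
            Finset.card_univ, Fintype.card_fin, smul_eq_mul]
        have hlb : 2 * U.card ≤ ∑ e ∈ U, ((univ : Finset (Fin r)).filter (fun i => e ∈ f i)).card := by
          calc 2 * U.card = ∑ _e ∈ U, 2 := by rw [Finset.sum_const, smul_eq_mul, mul_comm]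
            _ ≤ _ := by
                refine Finset.sum_le_sum fun e he => ?_
                obtain ⟨i₀, _, hi₀⟩ := Finset.mem_biUnion.mp he
                rcases hdeg e with h0 | h2
                · exfalso
                  have hmem : i₀ ∈ (univ : Finset (Fin r)).filter (fun i => e ∈ f i) := by
                    simp [hi₀]
                  rw [Finset.card_eq_zero] at h0
                  rw [h0] at hmem
                  exact absurd hmem (Finset.notMem_empty _)
                · exact h2
        have : 2 * U.card ≤ 2 * n := by
          calc 2 * U.card ≤ _ := hlb
            _ = r * m := hsum ▸ hsum2
            _ = 2 * n := hrm
        omega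
      have hubι : (ι ((univ : Finset (Fin r)).biUnion f)).card ≤ n := by rw [hι]; exact hub
      refine Finset.mem_sigma.mpr ⟨?_, ?_⟩
      · rw [Finset.mem_powersetCard]
        exact ⟨Finset.subset_univ _, hext2 _ hubι⟩
      · rw [Fintype.mem_piFinset]
        intro i
        rw [Finset.mem_powersetCard]
        exact ⟨(hιmono (hfi i)).trans (hext1 _ hubι), by rw [hι]; exact hcard _ (hvalid i)⟩
    · intro f _ g _ hfg
      have h2 := congrArg (fun p : (_ : Finset E') × (Fin r → Finset E') => p.snd) hfg
      funext i
      exact hιinj (congrFun h2 i)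
  · -- analytic part
    have hn0' : (0:ℝ) < n := Nat.cast_pos.mpr hn0
    have hm0' : (0:ℝ) < m := Nat.cast_pos.mpr hm0
    have hA : (N.choose n : ℝ) ≤ (Real.exp 1 * N / n) ^ n := choose_le_exp_pow_aux N n hn0
    have hB2 : (n.choose m : ℝ) ≤ (Real.exp 1 * n / m) ^ m := choose_le_exp_pow_aux n m hm0
    have hnR : 2 * (n:ℝ) = (r:ℝ) * k * d := by exact_mod_cast congrArg (Nat.cast (R := ℝ)) h2n
    have hd0 : (0:ℝ) < d := by exact_mod_cast hd
    have hk0 : (0:ℝ) < k := by exact_mod_cast hk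
    have hnval : (n:ℝ) = (r:ℝ) * k * d / 2 := by linarith
    have hbase : Real.exp 1 * N / n * (Real.exp 1 * n / m)^2
        = Real.exp 1 ^ 3 * r * B^(d+1) / (2*k) := by
      have hNR : (N:ℝ) = (d:ℝ) * (B:ℝ)^(d+1) := by rw [hNdef]; push_cast; ring
      have hmR : (m:ℝ) = (k:ℝ) * d := by rw [hmdef]; push_cast; ring
      rw [hNR, hmR, hnval]
      field_simp
    calc (N.choose n : ℝ) * (n.choose m : ℝ)^r
        ≤ (Real.exp 1 * N / n) ^ n * ((Real.exp 1 * n / m) ^ m) ^ r := by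
          refine mul_le_mul hA (pow_le_pow_left₀ (by positivity) hB2 r) (by positivity)
            (by positivity)
      _ = (Real.exp 1 * N / n) ^ n * (Real.exp 1 * n / m) ^ (m * r) := by rw [← pow_mul]
      _ = (Real.exp 1 * N / n) ^ n * ((Real.exp 1 * n / m) ^ 2) ^ n := by
          rw [← pow_mul, mul_comm m r, hrm, mul_comm 2 n]
      _ = (Real.exp 1 * N / n * (Real.exp 1 * n / m)^2) ^ n := by rw [← mul_pow]
      _ = (Real.exp 1 ^ 3 * r * B^(d+1) / (2*k)) ^ n := by rw [hbase]
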